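/- Under the same hypotheses as the second-page symmetry result (Hodge numbers of a hypothetical complex S^6 with the row-wise Euler characteristic equalities and the vanishing/isomorphism pattern on E_2), one has h_2^{0,1} = h^{1,2} − h^{1,1} + 1. In particular h^{1,2} − h^{1,1} + 1 ≥ 0, and the Frölicher spectral sequence degenerates at E_2 in bidegree (0,1) (i.e. h_2^{0,1} = 0) if and only if h^{1,2} = h^{1,1} − 1. -/
import Mathlib


/-- Under the same hypotheses as the second-page symmetry result for a
hypothetical complex structure on `S^6` (Hodge numbers `h p q` with Serre duality,
`h^{0,0}=1`, `h^{3,0}=0`, `h^{0,1}=h^{0,2}+1`; second-page dimensions `h2 p q` with the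
vanishing/isomorphism pattern; and the row-wise Euler characteristic equalities), one has
`h2^{0,1} = h^{1,2} − h^{1,1} + 1`. In particular `h^{1,2} − h^{1,1} + 1 ≥ 0`, and the
Frölicher spectral sequence degenerates at `E₂` in bidegree `(0,1)` (i.e. `h2^{0,1} = 0`)
if and only if `h^{1,2} = h^{1,1} − 1`. -/
theorem stmt11 (h h2 : ℕ → ℕ → ℕ)
    (hserre : ∀ p q, p ≤ 3 → q ≤ 3 → h p q = h (3 - p) (3 - q))
    (h00 : h 0 0 = 1) (h30 : h 3 0 = 0) (h01 : h 0 1 = h 0 2 + 1)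
    (h2_10 : h2 1 0 = 0) (h2_11 : h2 1 1 = 0) (h2_22 : h2 2 2 = 0) (h2_23 : h2 2 3 = 0)
    (h2_30 : h2 3 0 = 0) (h2_03 : h2 0 3 = 0)
    (h2_00 : h2 0 0 = 1) (h2_33 : h2 3 3 = 1)
    (hd2a : h2 0 1 = h2 2 0) (hd2b : h2 0 2 = h2 2 1)
    (hd2c : h2 1 2 = h2 3 1) (hd2d : h2 1 3 = h2 3 2)
    (heuler : ∀ q, q ≤ 3 →
      ∑ p ∈ Finset.range 4, (-1 : ℤ) ^ p * (h p q : ℤ) =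
      ∑ p ∈ Finset.range 4, (-1 : ℤ) ^ p * (h2 p q : ℤ)) :
    (h2 0 1 : ℤ) = (h 1 2 : ℤ) - (h 1 1 : ℤ) + 1 ∧
    (0 : ℤ) ≤ (h 1 2 : ℤ) - (h 1 1 : ℤ) + 1 ∧
    (h2 0 1 = 0 ↔ h 1 2 + 1 = h 1 1) := by
  have e0 := heuler 0 (by norm_num)
  have e1 := heuler 1 (by norm_num)
  have e2 := heuler 2 (by norm_num)
  have e3 := heuler 3 (by norm_num)
  simp [Finset.sum_range_succ] at e0 e1 e2 e3
  have s10 := hserre 1 0 (by norm_num) (by norm_num)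
  have s20 := hserre 2 0 (by norm_num) (by norm_num)
  have s21 := hserre 2 1 (by norm_num) (by norm_num)
  have s31 := hserre 3 1 (by norm_num) (by norm_num)
  have s22 := hserre 2 2 (by norm_num) (by norm_num)
  have s32 := hserre 3 2 (by norm_num) (by norm_num)
  have s03 := hserre 0 3 (by norm_num) (by norm_num)
  have s33 := hserre 3 3 (by norm_num) (by norm_num)
  norm_num at s10 s20 s21 s31 s22 s32 s03 s33
  refine ⟨by omega, by omega, by omega⟩
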